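/- Let m ≥ 2 and k ≥ 0 be integers, ω = exp(2π√−1/m), and let k̄ ∈ {0, 1, …, m−1} be the least nonnegative residue of k modulo m. Then ∑_{i=1}^{m−1} ω^{i(k+1)}/(1 − ω^i)² = −(m²/2)·(B₂(k̄/m) − 1/(6m²)), where B₂(x) = x² − x + 1/6 is the second Bernoulli polynomial. -/

import Mathlib

open Complex Finset

/-- The second Bernoulli polynomial `B₂(x) = x² − x + 1/6` (over `ℂ`). -/
noncomputable def bernoulliTwoC (x : ℂ) : ℂ := x ^ 2 - x + 1 / 6

noncomputable def auxS (n : ℕ) (ω : ℂ) (k : ℕ) : ℂ :=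
    ∑ i ∈ Finset.Icc 1 n, ω ^ (i * (k + 1)) / (1 - ω ^ i) ^ 2

section Aux

variable {n : ℕ} {ω : ℂ}

lemma aux_den (hprim : IsPrimitiveRoot ω (n + 1)) {i : ℕ} (h1 : 1 ≤ i) (h2 : i ≤ n) :
    1 - ω ^ i ≠ 0 :=
  sub_ne_zero.2 (Ne.symm (hprim.pow_ne_one_of_pos_of_lt (by omega) (by omega)))

lemma aux_geom (hprim : IsPrimitiveRoot ω (n + 1)) {j : ℕ} (hj : ¬ (n + 1) ∣ j) :
    ∑ i ∈ Finset.range (n + 1), ω ^ (i * j) = 0 := by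
  have hz : ω ^ j ≠ 1 := fun h => hj ((hprim.pow_eq_one_iff_dvd j).1 h)
  have h1 : (ω ^ j) ^ (n + 1) = 1 := by
    rw [← pow_mul, mul_comm, pow_mul, hprim.pow_eq_one, one_pow]
  calc ∑ i ∈ Finset.range (n + 1), ω ^ (i * j)
      = ∑ i ∈ Finset.range (n + 1), (ω ^ j) ^ i := by
        refine Finset.sum_congr rfl fun i _ => ?_
        rw [← pow_mul, mul_comm]
    _ = ((ω ^ j) ^ (n + 1) - 1) / (ω ^ j - 1) := geom_sum_eq hz (n + 1)
    _ = 0 := by rw [h1, sub_self, zero_div]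

lemma aux_range_eq : Finset.range (n + 1) = insert 0 (Finset.Icc 1 n) := by
  ext x; simp [Finset.mem_Icc, Finset.mem_range]; omega

lemma aux_sum (hprim : IsPrimitiveRoot ω (n + 1)) {j : ℕ} (hj : ¬ (n + 1) ∣ j) :
    ∑ i ∈ Finset.Icc 1 n, ω ^ (i * j) = -1 := by
  have h0 : (0 : ℕ) ∉ Finset.Icc 1 n := by simp
  have h := aux_geom hprim hj
  rw [aux_range_eq, Finset.sum_insert h0] at h
  simp only [zero_mul, pow_zero] at h
  linear_combination h

lemma aux_T (hprim : IsPrimitiveRoot ω (n + 1)) {j : ℕ} (h1 : 1 ≤ j) (h2 : j ≤ n) :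
    ∑ i ∈ Finset.Icc 1 n, ω ^ (i * j) / (1 - ω ^ i) = (j : ℂ) - ((n : ℂ) + 2) / 2 := by
  induction j, h1 using Nat.le_induction with
  | base =>
    simp only [mul_one]
    have hrw : ∑ i ∈ Finset.Icc 1 n, ω ^ i / (1 - ω ^ i)
        = ∑ j ∈ Finset.range n, ω ^ (1 + j) / (1 - ω ^ (1 + j)) := by
      rw [← Finset.Ico_add_one_right_eq_Icc, Finset.sum_Ico_eq_sum_range]
      simp
    have hrefl : ∑ j ∈ Finset.range n, ω ^ (1 + j) / (1 - ω ^ (1 + j))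
        = ∑ j ∈ Finset.range n, ω ^ (n - j) / (1 - ω ^ (n - j)) := by
      rw [← Finset.sum_range_reflect]
      refine Finset.sum_congr rfl fun j hj => ?_
      rw [Finset.mem_range] at hj
      have he : 1 + (n - 1 - j) = n - j := by omega
      rw [he]
    have hpair : ∀ j ∈ Finset.range n,
        ω ^ (1 + j) / (1 - ω ^ (1 + j)) + ω ^ (n - j) / (1 - ω ^ (n - j)) = -1 := by
      intro j hj
      rw [Finset.mem_range] at hj
      have hd1 : 1 - ω ^ (1 + j) ≠ 0 := aux_den hprim (by omega) (by omega)
      have hd2 : 1 - ω ^ (n - j) ≠ 0 := aux_den hprim (by omega) (by omega)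
      have hzw : ω ^ (1 + j) * ω ^ (n - j) = 1 := by
        rw [← pow_add, show 1 + j + (n - j) = n + 1 from by omega, hprim.pow_eq_one]
      field_simp
      linear_combination -hzw
    have h2S : (∑ j ∈ Finset.range n, ω ^ (1 + j) / (1 - ω ^ (1 + j)))
        + (∑ j ∈ Finset.range n, ω ^ (n - j) / (1 - ω ^ (n - j))) = -(n : ℂ) := by
      rw [← Finset.sum_add_distrib, Finset.sum_congr rfl hpair]
      simp
    rw [← hrefl] at h2S
    rw [hrw]
    push_cast
    linear_combination h2S / 2
  | succ j hj ih =>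
    have hjn : j ≤ n := by omega
    have hdvd : ¬ (n + 1) ∣ j := by
      intro h
      have := Nat.eq_zero_of_dvd_of_lt h (by omega)
      omega
    have hstep : ∀ i ∈ Finset.Icc 1 n,
        ω ^ (i * (j + 1)) / (1 - ω ^ i) = ω ^ (i * j) / (1 - ω ^ i) - ω ^ (i * j) := by
      intro i hi
      rw [Finset.mem_Icc] at hi
      have hd := aux_den hprim hi.1 hi.2
      rw [show i * (j + 1) = i * j + i from by ring, pow_add]
      field_simp
      ring
    rw [Finset.sum_congr rfl hstep, Finset.sum_sub_distrib, ih hjn, aux_sum hprim hdvd]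
    push_cast
    ring

lemma auxS_rec (hprim : IsPrimitiveRoot ω (n + 1)) (k : ℕ) :
    auxS n ω k = auxS n ω (k + 1) + ∑ i ∈ Finset.Icc 1 n, ω ^ (i * (k + 1)) / (1 - ω ^ i) := by
  unfold auxS
  rw [← Finset.sum_add_distrib]
  refine Finset.sum_congr rfl fun i hi => ?_
  rw [Finset.mem_Icc] at hi
  have hd := aux_den hprim hi.1 hi.2
  rw [show i * (k + 1 + 1) = i * (k + 1) + i from by ring, pow_add]
  field_simp
  ring

lemma auxS_form (hprim : IsPrimitiveRoot ω (n + 1)) :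
    ∀ k, k ≤ n →
      auxS n ω k = auxS n ω 0 - ((k : ℂ) * ((k : ℂ) + 1) / 2 - (k : ℂ) * ((n : ℂ) + 2) / 2) := by
  intro k
  induction k with
  | zero => intro _; simp
  | succ k ih =>
    intro hk
    have h1 := auxS_rec hprim k
    rw [aux_T hprim (by omega) (by omega), ih (by omega)] at h1
    push_cast at h1 ⊢
    linear_combination -h1

lemma auxS_sum (hprim : IsPrimitiveRoot ω (n + 1)) :
    ∑ k ∈ Finset.range (n + 1), auxS n ω k = 0 := by
  unfold auxS
  rw [Finset.sum_comm]
  refine Finset.sum_eq_zero fun i hi => ?_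
  rw [Finset.mem_Icc] at hi
  have hdvd : ¬ (n + 1) ∣ i := by
    intro h
    have := Nat.eq_zero_of_dvd_of_lt h (by omega)
    omega
  have hptw : ∀ kk ∈ Finset.range (n + 1), ω ^ (i * (kk + 1)) / (1 - ω ^ i) ^ 2
      = ω ^ (kk * i) * (ω ^ i / (1 - ω ^ i) ^ 2) := by
    intro kk _
    rw [show i * (kk + 1) = kk * i + i from by ring, pow_add]
    ring
  rw [Finset.sum_congr rfl hptw, ← Finset.sum_mul, aux_geom hprim hdvd, zero_mul]

lemma sum_cast_range (N : ℕ) : ∑ kk ∈ Finset.range (N + 1), (kk : ℂ) = N * (N + 1) / 2 := by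
  induction N with
  | zero => simp
  | succ N ih =>
    rw [Finset.sum_range_succ, ih]
    push_cast
    ring

lemma sum_sq_cast_range (N : ℕ) :
    ∑ kk ∈ Finset.range (N + 1), (kk : ℂ) ^ 2 = N * (N + 1) * (2 * N + 1) / 6 := by
  induction N with
  | zero => simp
  | succ N ih =>
    rw [Finset.sum_range_succ, ih]
    push_cast
    ring

lemma auxS_zero (hprim : IsPrimitiveRoot ω (n + 1)) :
    auxS n ω 0 = -(n : ℂ) * ((n : ℂ) + 2) / 12 := by
  have hsum := auxS_sum hprim
  have hform : ∀ kk ∈ Finset.range (n + 1), auxS n ω kk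
      = auxS n ω 0 - ((kk : ℂ) * ((kk : ℂ) + 1) / 2 - (kk : ℂ) * ((n : ℂ) + 2) / 2) := by
    intro kk hk
    rw [Finset.mem_range] at hk
    exact auxS_form hprim kk (by omega)
  rw [Finset.sum_congr rfl hform, Finset.sum_sub_distrib, Finset.sum_const,
    Finset.card_range] at hsum
  have hsplit : ∀ kk ∈ Finset.range (n + 1),
      (kk : ℂ) * ((kk : ℂ) + 1) / 2 - (kk : ℂ) * ((n : ℂ) + 2) / 2
      = (kk : ℂ) ^ 2 * (1 / 2) + (kk : ℂ) * (-(((n : ℂ) + 1) / 2)) := by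
    intro kk _
    ring
  rw [Finset.sum_congr rfl hsplit, Finset.sum_add_distrib, ← Finset.sum_mul, ← Finset.sum_mul,
    sum_cast_range, sum_sq_cast_range, nsmul_eq_mul] at hsum
  push_cast at hsum
  have hne : ((n : ℂ) + 1) ≠ 0 := Nat.cast_add_one_ne_zero n
  have key : ((n : ℂ) + 1) * (auxS n ω 0 - (-(n : ℂ) * ((n : ℂ) + 2) / 12)) = 0 := by
    linear_combination hsum
  have := (mul_eq_zero.1 key).resolve_left hne
  linear_combination this

lemma auxS_period (hprim : IsPrimitiveRoot ω (n + 1)) (k : ℕ) :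
    auxS n ω k = auxS n ω (k % (n + 1)) := by
  unfold auxS
  refine Finset.sum_congr rfl fun i _ => ?_
  congr 1
  have hdm := Nat.div_add_mod k (n + 1)
  have hk : k + 1 = (n + 1) * (k / (n + 1)) + (k % (n + 1) + 1) := by omega
  rw [hk, show i * ((n + 1) * (k / (n + 1)) + (k % (n + 1) + 1))
      = (n + 1) * (i * (k / (n + 1))) + i * (k % (n + 1) + 1) from by ring,
    pow_add, pow_mul, hprim.pow_eq_one, one_pow, one_mul]

end Aux

/-- For integers `m ≥ 2`, `k ≥ 0`, `ω = exp(2π√−1/m)` and `k̄ = k mod m`,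
`∑_{i=1}^{m−1} ω^{i(k+1)}/(1 − ω^i)² = −(m²/2)·(B₂(k̄/m) − 1/(6m²))`, where `B₂` is the
second Bernoulli polynomial (`k̄/m` being the fractional part `{k/m}`). -/
theorem sum_root_pow_eq_bernoulli (m k : ℕ) (hm : 2 ≤ m)
    (ω : ℂ) (hω : ω = Complex.exp (2 * Real.pi * Complex.I / m)) :
    ∑ i ∈ Finset.Icc 1 (m - 1), ω ^ (i * (k + 1)) / (1 - ω ^ i) ^ 2 =
      -((m : ℂ) ^ 2 / 2) *
        (bernoulliTwoC (((k % m : ℕ) : ℂ) / (m : ℂ)) - 1 / (6 * (m : ℂ) ^ 2)) := by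
  obtain ⟨n, rfl⟩ : ∃ n, m = n + 1 := ⟨m - 1, by omega⟩
  have hn : 1 ≤ n := by omega
  have hprim : IsPrimitiveRoot ω (n + 1) := by
    rw [hω]; exact Complex.isPrimitiveRoot_exp (n + 1) (by omega)
  have hLHS : ∑ i ∈ Finset.Icc 1 (n + 1 - 1), ω ^ (i * (k + 1)) / (1 - ω ^ i) ^ 2
      = auxS n ω k := by
    simp [auxS]
  have hrlt : k % (n + 1) ≤ n := Nat.lt_succ_iff.mp (Nat.mod_lt k (by omega))
  rw [hLHS, auxS_period hprim, auxS_form hprim _ hrlt, auxS_zero hprim]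
  unfold bernoulliTwoC
  have hrhs : ∀ (N R : ℂ), N ≠ 0 →
      -(N ^ 2 / 2) * ((R / N) ^ 2 - R / N + 1 / 6 - 1 / (6 * N ^ 2))
        = -R ^ 2 / 2 + N * R / 2 - N ^ 2 / 12 + 1 / 12 := by
    intro N R hN
    have h2 : N ^ 2 ≠ 0 := pow_ne_zero 2 hN
    have e1 : N ^ 2 * (R / N) ^ 2 = R ^ 2 := by
      rw [div_pow, mul_comm, div_mul_cancel₀ _ h2]
    have e2 : N ^ 2 * (R / N) = N * R := by
      rw [pow_two, mul_assoc, mul_comm N (R / N), div_mul_cancel₀ _ hN, mul_comm]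
    have e3 : N ^ 2 * (1 / (6 * N ^ 2)) = 1 / 6 := by
      rw [one_div, mul_inv, ← mul_assoc, mul_comm (N ^ 2), mul_assoc,
        mul_inv_cancel₀ h2, mul_one, one_div]
    calc -(N ^ 2 / 2) * ((R / N) ^ 2 - R / N + 1 / 6 - 1 / (6 * N ^ 2))
        = -(1 / 2) * (N ^ 2 * (R / N) ^ 2 - N ^ 2 * (R / N) + N ^ 2 * (1 / 6)
            - N ^ 2 * (1 / (6 * N ^ 2))) := by ring
      _ = -R ^ 2 / 2 + N * R / 2 - N ^ 2 / 12 + 1 / 12 := by rw [e1, e2, e3]; ring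
  rw [hrhs _ _ (Nat.cast_ne_zero.mpr (by omega : n + 1 ≠ 0))]
  push_cast
  ring
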